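/- Let A₁ ⊆ B(K) be an irreducible representation of a simple C*-algebra with 1_K ∈ A₁, let H be a group, and let u : H → U(K) with u(1) = 1_K satisfy: (1) u(h)·A₁ = A₁·u(h) for all h; (2) u(h₁)u(h₂)u(h₁h₂)* ∈ A₁ for all h₁,h₂; (3) for every h ≠ 1 the automorphism Ad[u(h)] restricted to A₁ is not inner. Then the sum of subspaces ∑_{h∈H} A₁·u(h) ⊆ B(K) is direct. -/

import Mathlib

set_option maxHeartbeats 40000000 in
open ContinuousLinearMap in
private lemma sum_direct_key {K : Type*} [NormedAddCommGroup K] [InnerProductSpace ℂ K]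
    [CompleteSpace K]
    (A : StarSubalgebra ℂ (K →L[ℂ] K)) (hA : IsClosed (A : Set (K →L[ℂ] K)))
    (hirr : ∀ T : K →L[ℂ] K, (∀ a ∈ A, T * a = a * T) → ∃ c : ℂ, T = c • 1)
    (hsimple : ∀ I : TwoSidedIdeal A, IsClosed (I : Set A) → I = ⊥ ∨ I = ⊤)
    {H : Type*} [Group H] (u : H → (K →L[ℂ] K))
    (hu : ∀ h, u h ∈ unitary (K →L[ℂ] K)) (hu1 : u 1 = 1)
    (hconj : ∀ h, ∀ b ∈ A, u h * b * star (u h) ∈ A)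
    (hconj' : ∀ h, ∀ b ∈ A, star (u h) * b * u h ∈ A)
    (hdelta : ∀ h₁ h₂ : H, u h₁ * u h₂ * star (u (h₁ * h₂)) ∈ A)
    (hnotinner : ∀ h : H, h ≠ 1 →
      ¬ ∃ v : K →L[ℂ] K, v ∈ A ∧ v ∈ unitary (K →L[ℂ] K) ∧
        ∀ a ∈ A, u h * a * star (u h) = v * a * star v) :
    ∀ n : ℕ, ∀ s : Finset H, s.card ≤ n → ∀ x : H → (K →L[ℂ] K),
      (∀ h ∈ s, x h ∈ A) → ∑ h ∈ s, x h * u h = 0 → ∀ h₀ ∈ s, x h₀ = 0 := by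
  classical
  have hsU : ∀ h, star (u h) * u h = 1 := fun h => (Unitary.mem_iff.1 (hu h)).1
  have hUs : ∀ h, u h * star (u h) = 1 := fun h => (Unitary.mem_iff.1 (hu h)).2
  have hcl : ∀ (h) (X : K →L[ℂ] K), u h * (star (u h) * X) = X := fun h X => by
    rw [← mul_assoc, hUs, one_mul]
  have hcl' : ∀ (h) (X : K →L[ℂ] K), star (u h) * (u h * X) = X := fun h X => by
    rw [← mul_assoc, hsU, one_mul]
  intro n
  induction n with
  | zero =>
    intro s hs x _ _ h₀ hh₀
    rw [Nat.le_zero, Finset.card_eq_zero] at hs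
    simp [hs] at hh₀
  | succ n IH =>
    intro s hcard x hxA hsum h₀ hh₀
    -- translate so that the coefficient of interest sits at 1
    set t : Finset H := s.image (fun h => h * h₀⁻¹) with ht
    set y : H → (K →L[ℂ] K) :=
      fun g => x (g * h₀) * star (u g * u h₀ * star (u (g * h₀))) with hy
    have hmem_t : ∀ g ∈ t, g * h₀ ∈ s := by
      intro g hg
      rw [ht, Finset.mem_image] at hg
      obtain ⟨h, hh, rfl⟩ := hg
      simpa using hh
    have h1t : (1 : H) ∈ t := by
      rw [ht, Finset.mem_image]
      exact ⟨h₀, hh₀, by simp⟩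
    have htcard : t.card ≤ n + 1 := le_trans Finset.card_image_le hcard
    have hyA : ∀ g ∈ t, y g ∈ A := fun g hg =>
      mul_mem (hxA _ (hmem_t g hg)) (star_mem (hdelta g h₀))
    have hy1 : y 1 = x h₀ := by
      simp [hy, hu1, hUs h₀]
    have hysum : ∑ g ∈ t, y g * u g = 0 := by
      have hinj : ∀ a ∈ s, ∀ b ∈ s, a * h₀⁻¹ = b * h₀⁻¹ → a = b := fun a _ b _ hab =>
        mul_right_cancel hab
      rw [ht, Finset.sum_image hinj]
      have hterm : ∀ h ∈ s,
          y (h * h₀⁻¹) * u (h * h₀⁻¹) = x h * u h * star (u h₀) := by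
        intro h hh
        have hgh : h * h₀⁻¹ * h₀ = h := by group
        have key : star (u (h * h₀⁻¹) * u h₀ * star (u (h * h₀⁻¹ * h₀))) * u (h * h₀⁻¹)
            = u h * star (u h₀) := by
          have e : star (u (h * h₀⁻¹) * u h₀ * star (u (h * h₀⁻¹ * h₀))) * u (h * h₀⁻¹)
              = u (h * h₀⁻¹ * h₀) *
                (star (u h₀) * (star (u (h * h₀⁻¹)) * u (h * h₀⁻¹))) := by
            simp only [star_mul, star_star, mul_assoc]
          rw [e, hsU, mul_one, hgh]
        simp only [hy]
        rw [mul_assoc, key, hgh, ← mul_assoc]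
      rw [Finset.sum_congr rfl hterm, ← Finset.sum_mul, hsum, zero_mul]
    -- it suffices to prove `y 1 = 0`
    rw [← hy1]
    by_cases hK : (1 : K →L[ℂ] K) = 0
    · calc y 1 = y 1 * 1 := (mul_one _).symm
        _ = 0 := by rw [hK, mul_zero]
    by_contra hy1ne
    haveI : CompleteSpace A := hA.completeSpace_coe
    -- the set of coefficients at 1 of relations supported in t
    set Jset : Set A := {a : A | ∃ z : H → (K →L[ℂ] K),
      (∀ g ∈ t, z g ∈ A) ∧ (∑ g ∈ t, z g * u g = 0) ∧ z 1 = (a : K →L[ℂ] K)} with hJset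
    have hJ0 : (0 : A) ∈ Jset := ⟨fun _ => 0, fun _ _ => zero_mem _, by simp, by simp⟩
    have hJadd : ∀ {a b : A}, a ∈ Jset → b ∈ Jset → a + b ∈ Jset := by
      rintro a b ⟨z, hz1, hz2, hz3⟩ ⟨w, hw1, hw2, hw3⟩
      refine ⟨fun g => z g + w g, fun g hg => add_mem (hz1 g hg) (hw1 g hg), ?_, by
        simp [hz3, hw3]⟩
      simp only [add_mul, Finset.sum_add_distrib, hz2, hw2, add_zero]
    have hJneg : ∀ {a : A}, a ∈ Jset → -a ∈ Jset := by
      rintro a ⟨z, hz1, hz2, hz3⟩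
      refine ⟨fun g => -(z g), fun g hg => neg_mem (hz1 g hg), ?_, by simp [hz3]⟩
      simp only [neg_mul, Finset.sum_neg_distrib, hz2, neg_zero]
    have hJl : ∀ {c a : A}, a ∈ Jset → c * a ∈ Jset := by
      rintro c a ⟨z, hz1, hz2, hz3⟩
      refine ⟨fun g => (c : K →L[ℂ] K) * z g,
        fun g hg => mul_mem c.2 (hz1 g hg), ?_, by push_cast; rw [hz3]⟩
      simp only [mul_assoc, ← Finset.mul_sum, hz2, mul_zero]
    have hJr : ∀ {a c : A}, a ∈ Jset → a * c ∈ Jset := by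
      rintro a c ⟨z, hz1, hz2, hz3⟩
      refine ⟨fun g => z g * (u g * (c : K →L[ℂ] K) * star (u g)),
        fun g hg => mul_mem (hz1 g hg) (hconj g _ c.2), ?_, ?_⟩
      · have hterm : ∀ g, z g * (u g * (c : K →L[ℂ] K) * star (u g)) * u g
            = z g * u g * (c : K →L[ℂ] K) := by
          intro g
          simp only [mul_assoc, hsU, mul_one]
        simp only [hterm, ← Finset.sum_mul, hz2, zero_mul]
      · push_cast
        rw [hz3, hu1]
        simp
    have hGex : ∃ G : AddSubgroup A, (G : Set A) = Jset :=
      ⟨{ carrier := Jset, add_mem' := hJadd, zero_mem' := hJ0, neg_mem' := hJneg }, rfl⟩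
    obtain ⟨G, hGcoe⟩ := hGex
    have hmemc : ∀ {a : A}, a ∈ closure Jset ↔ a ∈ G.topologicalClosure := by
      intro a
      rw [← SetLike.mem_coe, AddSubgroup.topologicalClosure_coe, hGcoe]
    have haddc : ∀ {a b : A}, a ∈ closure Jset → b ∈ closure Jset →
        a + b ∈ closure Jset := fun ha hb => hmemc.2 (add_mem (hmemc.1 ha) (hmemc.1 hb))
    have hnegc : ∀ {a : A}, a ∈ closure Jset → -a ∈ closure Jset :=
      fun ha => hmemc.2 (neg_mem (hmemc.1 ha))
    obtain ⟨J, hJcoe⟩ : ∃ J : TwoSidedIdeal A, (J : Set A) = closure Jset :=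
      ⟨TwoSidedIdeal.mk' (closure Jset) (subset_closure hJ0)
        (fun ha hb => haddc ha hb) (fun ha => hnegc ha)
        (fun {c b} hb => (Set.MapsTo.closure (fun x hx => hJl hx)
          (continuous_const.mul continuous_id)) hb)
        (fun {b c} hb => (Set.MapsTo.closure (fun x hx => hJr hx)
          (continuous_id.mul continuous_const)) hb),
        TwoSidedIdeal.coe_mk' _ _ _ _ _ _⟩
    have hJclosed : IsClosed (J : Set A) := by rw [hJcoe]; exact isClosed_closure
    have hJtop : J = ⊤ := by
      rcases hsimple J hJclosed with hbot | htop
      · exfalso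
        have : (⟨y 1, hyA 1 h1t⟩ : A) ∈ J := by
          rw [SetLike.mem_coe.symm, hJcoe]
          exact subset_closure ⟨y, hyA, hysum, rfl⟩
        rw [hbot, TwoSidedIdeal.mem_bot] at this
        exact hy1ne (congrArg Subtype.val this)
      · exact htop
    have h1J : (1 : A) ∈ closure Jset := by
      rw [← hJcoe, SetLike.mem_coe, hJtop]
      exact TwoSidedIdeal.mem_top A
    obtain ⟨τ, hτJ, hdist⟩ := Metric.mem_closure_iff.1 h1J 1 one_pos
    have hnorm : ‖(1 : A) - τ‖ < 1 := by rwa [dist_eq_norm] at hdist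
    set υ : Aˣ := Units.oneSub ((1 : A) - τ) hnorm with hυdef
    have hυval : (υ : A) = τ := sub_sub_cancel 1 τ
    set e : K →L[ℂ] K := ((↑υ⁻¹ : A) : K →L[ℂ] K) with he
    have heA : e ∈ A := (↑υ⁻¹ : A).2
    have heτ : e * ((τ : A) : K →L[ℂ] K) = 1 := by
      have h1 : (↑υ⁻¹ * ↑υ : A) = 1 := υ.inv_mul
      have h2 := congrArg (fun a : A => (a : K →L[ℂ] K)) h1
      push_cast at h2
      rwa [hυval] at h2
    obtain ⟨z, hzA, hzsum, hz1⟩ := hτJ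
    set w : H → (K →L[ℂ] K) := fun g => e * z g with hw
    have hwA : ∀ g ∈ t, w g ∈ A := fun g hg => mul_mem heA (hzA g hg)
    have hwsum : ∑ g ∈ t, w g * u g = 0 := by
      simp only [hw, mul_assoc, ← Finset.mul_sum, hzsum, mul_zero]
    have hw1 : w 1 = 1 := by rw [hw]; simp only [hz1]; exact heτ
    -- all other coefficients implement Ad[u g] as "inner-like"
    have hcent : ∀ a ∈ A, ∀ g ∈ t.erase 1,
        a * w g = w g * (u g * a * star (u g)) := by
      intro a ha
      set R : H → (K →L[ℂ] K) := fun g => a * w g - w g * (u g * a * star (u g)) with hR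
      have hRA : ∀ g ∈ t.erase 1, R g ∈ A := fun g hg =>
        sub_mem (mul_mem ha (hwA g (Finset.mem_of_mem_erase hg)))
          (mul_mem (hwA g (Finset.mem_of_mem_erase hg)) (hconj g a ha))
      have hfull : ∑ g ∈ t, R g * u g = 0 := by
        have hterm : ∀ g, R g * u g = a * (w g * u g) - (w g * u g) * a := by
          intro g
          simp only [hR, sub_mul, mul_assoc, hsU, mul_one]
        simp only [hterm, Finset.sum_sub_distrib, ← Finset.mul_sum, ← Finset.sum_mul,
          hwsum, mul_zero, zero_mul, sub_zero]
      have hR1 : R 1 * u 1 = 0 := by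
        simp [hR, hw1, hu1]
      have hErase : ∑ g ∈ t.erase 1, R g * u g = 0 := by
        have := Finset.add_sum_erase t (fun g => R g * u g) h1t
        simp only [hfull, hR1, zero_add] at this
        exact this
      have hcardE : (t.erase 1).card ≤ n := by
        rw [Finset.card_erase_of_mem h1t]
        omega
      intro g hg
      have := IH (t.erase 1) hcardE R hRA hErase g hg
      rw [hR] at this
      exact sub_eq_zero.1 this
    -- some other coefficient must be nonzero
    have hnz : ∃ g ∈ t.erase 1, w g ≠ 0 := by
      by_contra hall
      push_neg at hall
      have : ∑ g ∈ t, w g * u g = 1 := by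
        have hz0 : ∑ g ∈ t.erase 1, w g * u g = 0 :=
          Finset.sum_eq_zero (fun g hg => by rw [hall g hg, zero_mul])
        have := Finset.add_sum_erase t (fun g => w g * u g) h1t
        simp only [hz0, add_zero, hw1, hu1, one_mul] at this
        exact this.symm
      rw [hwsum] at this
      exact hK this.symm
    obtain ⟨g, hgE, hZne⟩ := hnz
    have hg1 : g ≠ 1 := (Finset.mem_erase.1 hgE).1
    have hZA : w g ∈ A := hwA g (Finset.mem_of_mem_erase hgE)
    have hrel : ∀ a ∈ A, a * w g = w g * (u g * a * star (u g)) := fun a ha =>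
      hcent a ha g hgE
    obtain ⟨Z, hZeq⟩ : ∃ Z : K →L[ℂ] K, w g = Z := ⟨w g, rfl⟩
    rw [hZeq] at hZne hZA hrel
    -- the star version
    have hstar : ∀ b ∈ A, (u g * b * star (u g)) * star Z = star Z * b := by
      intro b hb
      have h1 := hrel (star b) (star_mem hb)
      have h2 := congrArg star h1
      simp only [star_mul, star_star, mul_assoc] at h2
      calc (u g * b * star (u g)) * star Z = u g * (b * (star (u g) * star Z)) := by
            simp only [mul_assoc]
        _ = star Z * b := by rw [← h2]
      -- note: need to double check orientation
    -- Z* Z and Z Z* are scalars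
    have hpcomm : ∀ c ∈ A, (star Z * Z) * c = c * (star Z * Z) := by
      intro c hc
      have hb : star (u g) * c * u g ∈ A := hconj' g c hc
      have hc' : u g * (star (u g) * c * u g) * star (u g) = c := by
        simp only [mul_assoc, hUs, mul_one, hcl]
      have h3 : c * star Z = star Z * (star (u g) * c * u g) := by
        have h4 := hstar _ hb
        rw [hc'] at h4
        exact h4
      calc (star Z * Z) * c = star Z * (Z * c) := by rw [mul_assoc]
        _ = star Z * (Z * (u g * (star (u g) * c * u g) * star (u g))) := by rw [hc']
        _ = star Z * ((star (u g) * c * u g) * Z) := by rw [← hrel _ hb]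
        _ = (star Z * (star (u g) * c * u g)) * Z := by rw [← mul_assoc]
        _ = (c * star Z) * Z := by rw [← h3]
        _ = c * (star Z * Z) := by rw [mul_assoc]
    have hqcomm : ∀ a ∈ A, (Z * star Z) * a = a * (Z * star Z) := by
      intro a ha
      calc (Z * star Z) * a = Z * (star Z * a) := by rw [mul_assoc]
        _ = Z * ((u g * a * star (u g)) * star Z) := by rw [hstar a ha]
        _ = (Z * (u g * a * star (u g))) * star Z := by rw [← mul_assoc]
        _ = (a * Z) * star Z := by rw [← hrel a ha]
        _ = a * (Z * star Z) := by rw [mul_assoc]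
    obtain ⟨c, hp⟩ := hirr (star Z * Z) hpcomm
    obtain ⟨c', hq⟩ := hirr (Z * star Z) hqcomm
    have hcc' : c' = c := by
      have h1 : Z * (star Z * Z) = (Z * star Z) * Z := by rw [mul_assoc]
      rw [hp, hq] at h1
      have h2 : c • Z = c' • Z := by
        rw [mul_smul_comm, smul_mul_assoc, mul_one, one_mul] at h1
        exact h1
      by_contra hne
      have : (c - c') • Z = 0 := by rw [sub_smul, h2, sub_self]
      rcases smul_eq_zero.1 this with h | h
      · exact hne (sub_eq_zero.1 h).symm
      · exact hZne h
    -- c is a positive real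
    obtain ⟨ξ, hξ⟩ : ∃ ξ : K, Z ξ ≠ 0 := by
      by_contra hallz
      push_neg at hallz
      exact hZne (ContinuousLinearMap.ext fun ξ => by simp [hallz ξ])
    have hξ0 : ξ ≠ 0 := fun h => hξ (by simp [h])
    have hip : ((‖Z ξ‖ : ℂ) ^ 2) = c * ((‖ξ‖ : ℂ) ^ 2) := by
      have happ : (star Z * Z) ξ = c • ξ := by rw [hp]; simp
      calc ((‖Z ξ‖ : ℂ) ^ 2) = (inner ℂ (Z ξ) (Z ξ) : ℂ) :=
            (inner_self_eq_norm_sq_to_K (𝕜 := ℂ) (Z ξ)).symm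
        _ = inner ℂ ξ ((star Z * Z) ξ) := by
            rw [ContinuousLinearMap.star_eq_adjoint]
            exact (ContinuousLinearMap.adjoint_inner_right Z ξ (Z ξ)).symm
        _ = inner ℂ ξ (c • ξ) := by rw [happ]
        _ = c * (inner ℂ ξ ξ : ℂ) := by rw [inner_smul_right]
        _ = c * ((‖ξ‖ : ℂ) ^ 2) := congrArg (c * ·) (inner_self_eq_norm_sq_to_K ξ)
    set r : ℝ := ‖Z ξ‖ ^ 2 / ‖ξ‖ ^ 2 with hr
    have hrpos : 0 < r :=
      div_pos (pow_pos (norm_pos_iff.2 hξ) 2) (pow_pos (norm_pos_iff.2 hξ0) 2)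
    have hcr : c = (r : ℂ) := by
      have hξne : ((‖ξ‖ : ℂ) ^ 2) ≠ 0 :=
        pow_ne_zero 2 (Complex.ofReal_ne_zero.2 (norm_ne_zero_iff.2 hξ0))
      rw [hr]
      push_cast
      rw [eq_div_iff hξne]
      linear_combination -hip
    -- build the unitary
    set γ : ℂ := (((Real.sqrt r)⁻¹ : ℝ) : ℂ) with hγ
    have hγγ : γ * γ * (r : ℂ) = 1 := by
      have hs : Real.sqrt r * Real.sqrt r = r := Real.mul_self_sqrt hrpos.le
      have hsne : Real.sqrt r ≠ 0 := ne_of_gt (Real.sqrt_pos.2 hrpos)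
      have hreal : (Real.sqrt r)⁻¹ * (Real.sqrt r)⁻¹ * r = 1 := by
        nth_rewrite 3 [← hs]
        field_simp
      rw [hγ]
      exact_mod_cast hreal
    set v : K →L[ℂ] K := γ • Z with hv
    have hvA : v ∈ A := SMulMemClass.smul_mem γ hZA
    have hstarv : star v = γ • star Z := by
      rw [hv, star_smul, hγ, Complex.star_def, Complex.conj_ofReal]
    have hvv : star v * v = 1 := by
      rw [hstarv, hv, smul_mul_smul_comm, hp, hcr, smul_smul, hγγ, one_smul]
    have hvv' : v * star v = 1 := by
      rw [hstarv, hv, smul_mul_smul_comm, hq, hcc', hcr, smul_smul, hγγ, one_smul]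
    have hvU : v ∈ unitary (K →L[ℂ] K) := Unitary.mem_iff.2 ⟨hvv, hvv'⟩
    have hinner : ∀ a ∈ A, u g * a * star (u g) = star v * a * star (star v) := by
      intro a ha
      have h1 : a * v = v * (u g * a * star (u g)) := by
        rw [hv, mul_smul_comm, smul_mul_assoc, hrel a ha]
      calc u g * a * star (u g)
          = (star v * v) * (u g * a * star (u g)) := by rw [hvv, one_mul]
        _ = star v * (v * (u g * a * star (u g))) := by rw [mul_assoc]
        _ = star v * (a * v) := by rw [← h1]
        _ = star v * a * star (star v) := by rw [star_star, mul_assoc]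
    exact hnotinner g hg1 ⟨star v, star_mem hvA, Unitary.star_mem hvU, hinner⟩

/-- Lemma `lem:sum direct`: if `A₁ ⊆ B(K)` is an irreducible representation of a simple
C*-algebra, `u : H → U(K)` normalizes `A₁`, has `δu(h₁,h₂) ∈ A₁`, and `Ad[u(h)]|_{A₁}` is
non-inner for `h ≠ 1`, then the sum `∑ₕ A₁·u(h)` is direct. -/
theorem stmt1 {K : Type*} [NormedAddCommGroup K] [InnerProductSpace ℂ K] [CompleteSpace K]
    (A : StarSubalgebra ℂ (K →L[ℂ] K)) (hA : IsClosed (A : Set (K →L[ℂ] K)))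
    (hirr : ∀ T : K →L[ℂ] K, (∀ a ∈ A, T * a = a * T) → ∃ c : ℂ, T = c • 1)
    (hsimple : ∀ I : TwoSidedIdeal A, IsClosed (I : Set A) → I = ⊥ ∨ I = ⊤)
    {H : Type*} [Group H] (u : H → (K →L[ℂ] K))
    (hu : ∀ h, u h ∈ unitary (K →L[ℂ] K)) (hu1 : u 1 = 1)
    (hcomm : ∀ h, (fun a => a * u h) '' (A : Set (K →L[ℂ] K))
      = (fun a => u h * a) '' (A : Set (K →L[ℂ] K)))
    (hdelta : ∀ h₁ h₂ : H, u h₁ * u h₂ * star (u (h₁ * h₂)) ∈ A)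
    (hnotinner : ∀ h : H, h ≠ 1 →
      ¬ ∃ v : K →L[ℂ] K, v ∈ A ∧ v ∈ unitary (K →L[ℂ] K) ∧
        ∀ a ∈ A, u h * a * star (u h) = v * a * star v) :
    ∀ (s : Finset H) (x : H → (K →L[ℂ] K)), (∀ h ∈ s, x h ∈ A) →
      ∑ h ∈ s, x h * u h = 0 → ∀ h ∈ s, x h = 0 := by
  have hUs : ∀ h, u h * star (u h) = 1 := fun h => (Unitary.mem_iff.1 (hu h)).2
  have hsU : ∀ h, star (u h) * u h = 1 := fun h => (Unitary.mem_iff.1 (hu h)).1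
  have hconj : ∀ h, ∀ b ∈ A, u h * b * star (u h) ∈ A := by
    intro h b hb
    have : u h * b ∈ (fun a => u h * a) '' (A : Set (K →L[ℂ] K)) := ⟨b, hb, rfl⟩
    rw [← hcomm h] at this
    obtain ⟨a, ha, hae⟩ := this
    have : u h * b * star (u h) = a := by
      rw [← hae]
      simp only [mul_assoc, hUs, mul_one]
    rwa [this]
  have hconj' : ∀ h, ∀ b ∈ A, star (u h) * b * u h ∈ A := by
    intro h b hb
    have : b * u h ∈ (fun a => a * u h) '' (A : Set (K →L[ℂ] K)) := ⟨b, hb, rfl⟩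
    rw [hcomm h] at this
    obtain ⟨a, ha, hae⟩ := this
    have : star (u h) * b * u h = a := by
      rw [mul_assoc, ← hae, ← mul_assoc, hsU, one_mul]
    rwa [this]
  intro s x hxA hsum h hs
  exact sum_direct_key A hA hirr hsimple u hu hu1 hconj hconj' hdelta hnotinner
    s.card s le_rfl x hxA hsum h hs
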